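/- Consider the classical birth-death Markov generator on {1,...,n}: (L_cl f)(x) = (1/2)x(n-x)[f(x+1)-f(x)] + (1/2)(x-1)(n-x+1)[f(x-1)-f(x)]. The polynomials γ^{(i)}(x) = c_i Σ_{j=0}^i (-1)^{i-j} C(i,j) C(x-1,j) C(n-x,i-j) (for any normalization constants c_i ≠ 0), i = 0,...,n-1, satisfy -L_cl γ^{(i)} = (i(i+1)/2) γ^{(i)}, and ℂⁿ = ⊕_{i=0}^{n-1} ℂγ^{(i)}. In particular L_cl is reversible with respect to the uniform probability on {1,...,n}, and the spectrum of -L_cl is {i(i+1)/2 : 0 ≤ i ≤ n-1}. -/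

import Mathlib

noncomputable section

/-- The birth-death generator
`(L_cl f)(x) = (1/2)x(n-x)[f(x+1)-f(x)] + (1/2)(x-1)(n-x+1)[f(x-1)-f(x)]`
on `{1,...,n}` (boundary coefficients vanish at `x = 1` and `x = n`). -/
noncomputable def Lcl (n : ℕ) (f : ℕ → ℂ) (x : ℕ) : ℂ :=
  (1/2 : ℂ) * x * ((n : ℂ) - x) * (f (x + 1) - f x)
    + (1/2 : ℂ) * ((x : ℂ) - 1) * ((n : ℂ) - x + 1) * (f (x - 1) - f x)

/-- The (unnormalized) discrete Chebyshev polynomial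
`γ⁽ⁱ⁾(x) = Σ_{j=0}^i (-1)^{i-j} C(i,j) C(x-1,j) C(n-x,i-j)`. -/
noncomputable def gamP (n i x : ℕ) : ℂ :=
  ∑ j ∈ Finset.range (i + 1),
    (-1 : ℂ) ^ (i - j) * (i.choose j) * ((x - 1).choose j) * ((n - x).choose (i - j))

namespace BDaux
open Finset

lemma hH1 (m k : ℕ) : ((m:ℂ) - (k:ℂ)) * (m.choose k) = ((k:ℂ) + 1) * (m.choose (k+1)) := by
  rcases le_or_gt k m with h | h
  · have h0 := Nat.choose_succ_right_eq m k
    have h3 := congrArg (fun t : ℕ => (t : ℂ)) h0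
    push_cast [Nat.cast_sub h] at h3
    linear_combination -h3
  · rw [Nat.choose_eq_zero_of_lt h, Nat.choose_eq_zero_of_lt (h.trans (Nat.lt_succ_self k))]
    simp

lemma hH3 (m k : ℕ) : (m:ℂ) * ((m-1).choose k) = ((m:ℂ) - k) * (m.choose k) := by
  rcases m with _ | p
  · rcases k with _ | k <;> simp
  · rcases le_or_gt k (p+1) with h | h
    · have h0 := Nat.choose_mul_succ_eq p k
      have h3 := congrArg (fun t : ℕ => (t : ℂ)) h0
      push_cast [Nat.cast_sub h] at h3
      push_cast [Nat.succ_sub_one]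
      linear_combination h3
    · rw [show p + 1 - 1 = p from rfl, Nat.choose_eq_zero_of_lt h,
        Nat.choose_eq_zero_of_lt (show p < k by omega)]
      simp

lemma hPas (m k : ℕ) : (((m+1).choose (k+1) : ℕ) : ℂ) = (m.choose (k+1) : ℂ) + (m.choose k : ℂ) := by
  push_cast [Nat.choose_succ_succ]
  ring

/-- two-variable form of the Chebyshev sum -/
def G (i u v : ℕ) : ℂ :=
  ∑ j ∈ Finset.range (i + 1),
    (-1 : ℂ) ^ (i - j) * (i.choose j) * (u.choose j) * (v.choose (i - j))

/-- telescoping certificate -/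
def V (i u v m : ℕ) : ℂ :=
  -(-1:ℂ)^(i-m) * m * (i.choose m) * ((u:ℂ)+(v:ℂ)+1-(i:ℂ)) * (u.choose (m-1)) * (v.choose (i-m))

lemma key (i u v : ℕ) :
    ((u:ℂ)+1)*(v:ℂ)*(G i (u+1) (v-1) - G i u v)
      + (u:ℂ)*((v:ℂ)+1)*(G i (u-1) (v+1) - G i u v)
      + (i:ℂ)*((i:ℂ)+1)*(G i u v) = 0 := by
  have expand :
      ((u:ℂ)+1)*(v:ℂ)*(G i (u+1) (v-1) - G i u v)
        + (u:ℂ)*((v:ℂ)+1)*(G i (u-1) (v+1) - G i u v)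
        + (i:ℂ)*((i:ℂ)+1)*(G i u v)
      = ∑ j ∈ Finset.range (i+1),
          (((u:ℂ)+1)*(v:ℂ)*((-1:ℂ)^(i-j) * (i.choose j) * ((u+1).choose j) * ((v-1).choose (i-j))
              - (-1:ℂ)^(i-j) * (i.choose j) * (u.choose j) * (v.choose (i-j)))
            + (u:ℂ)*((v:ℂ)+1)*((-1:ℂ)^(i-j) * (i.choose j) * ((u-1).choose j) * ((v+1).choose (i-j))
              - (-1:ℂ)^(i-j) * (i.choose j) * (u.choose j) * (v.choose (i-j)))
            + (i:ℂ)*((i:ℂ)+1)*((-1:ℂ)^(i-j) * (i.choose j) * (u.choose j) * (v.choose (i-j)))) := by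
    simp only [G, Finset.mul_sum, ← Finset.sum_sub_distrib, ← Finset.sum_add_distrib]
  rw [expand]
  have step : ∀ j ∈ Finset.range (i+1),
      (((u:ℂ)+1)*(v:ℂ)*((-1:ℂ)^(i-j) * (i.choose j) * ((u+1).choose j) * ((v-1).choose (i-j))
          - (-1:ℂ)^(i-j) * (i.choose j) * (u.choose j) * (v.choose (i-j)))
        + (u:ℂ)*((v:ℂ)+1)*((-1:ℂ)^(i-j) * (i.choose j) * ((u-1).choose j) * ((v+1).choose (i-j))
          - (-1:ℂ)^(i-j) * (i.choose j) * (u.choose j) * (v.choose (i-j)))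
        + (i:ℂ)*((i:ℂ)+1)*((-1:ℂ)^(i-j) * (i.choose j) * (u.choose j) * (v.choose (i-j))))
      = V i u v (j+1) - V i u v j := by
    intro j hj
    rw [Finset.mem_range] at hj
    obtain ⟨k, rfl⟩ := Nat.exists_eq_add_of_le (Nat.lt_succ_iff.mp hj)
    rcases j with _ | j' <;> rcases k with _ | k'
    · simp [V]
    · -- j = 0, k = k'+1
      have e1 : 0 + (k'+1) - 0 = k'+1 := by omega
      have e2 : 0 + (k'+1) - (0+1) = k' := by omega
      simp only [V, e1, e2, Nat.zero_add, Nat.choose_zero_right, Nat.choose_one_right,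
        Nat.choose_self, Nat.add_sub_cancel, Nat.sub_self, Nat.cast_one, Nat.cast_zero, Nat.cast_ofNat]
      have h1 := hH3 v (k'+1)
      have h2 := hPas v k'
      have h3 := hH1 v k'
      push_cast at h1 h2 h3 ⊢
      linear_combination ((-1:ℂ)^(k'+1)) * (((u:ℂ)+1) * h1 + (u:ℂ)*((v:ℂ)+1) * h2
        + ((u:ℂ)-(k':ℂ)-1) * h3)
    · -- j = j'+1, k = 0
      have e1 : (j'+1) + 0 - (j'+1) = 0 := by omega
      have e2 : (j'+1) + 0 - (j'+1+1) = 0 := by omega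
      have e3 : (j'+1) + 0 = j'+1 := by omega
      simp only [V, e1, e2, e3, Nat.choose_zero_right, Nat.choose_self, Nat.choose_succ_self,
        Nat.add_sub_cancel, Nat.cast_one, Nat.cast_zero]
      have h1 := hH3 u (j'+1)
      have h2 := hPas u j'
      have h3 := hH1 u j'
      push_cast at h1 h2 h3 ⊢
      linear_combination ((v:ℂ)+1) * h1 + ((u:ℂ)+1)*(v:ℂ) * h2 + ((v:ℂ)-(j':ℂ)-1) * h3
    · -- j = j'+1, k = k'+1
      have e1 : (j'+1) + (k'+1) - (j'+1) = k'+1 := by omega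
      have e2 : (j'+1) + (k'+1) - (j'+1+1) = k' := by omega
      have e3 : (j'+1+1) - 1 = j'+1 := by omega
      have e4 : (j'+1) - 1 = j' := by omega
      simp only [V, e1, e2, e3, e4]
      have hX1 := hPas u j'
      have hYm := hH3 v (k'+1)
      have hXm := hH3 u (j'+1)
      have hYp := hPas v k'
      have hXd := hH1 u j'
      have hYd := hH1 v k'
      have hZ := hH1 (j'+1+(k'+1)) (j'+1)
      push_cast at hX1 hYm hXm hYp hXd hYd hZ ⊢
      linear_combination ((-1:ℂ)^(k'+1)) * (
          ((u:ℂ)+1)*(v:ℂ)*((v-1).choose (k'+1) : ℂ)*(((j'+1+(k'+1)).choose (j'+1) : ℂ)) * hX1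
        + ((u:ℂ)+1)*((u.choose (j'+1) : ℂ) + (u.choose j' : ℂ))*(((j'+1+(k'+1)).choose (j'+1) : ℂ)) * hYm
        + ((v:ℂ)+1)*((v+1).choose (k'+1) : ℂ)*(((j'+1+(k'+1)).choose (j'+1) : ℂ)) * hXm
        + ((u:ℂ)-(j':ℂ)-1)*((v:ℂ)+1)*(u.choose (j'+1) : ℂ)*(((j'+1+(k'+1)).choose (j'+1) : ℂ)) * hYp
        + ((v:ℂ)-(k':ℂ)-1-((j':ℂ)+1))*(v.choose (k'+1) : ℂ)*(((j'+1+(k'+1)).choose (j'+1) : ℂ)) * hXd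
        + ((u:ℂ)-(j':ℂ)-1-((k':ℂ)+1))*(u.choose (j'+1) : ℂ)*(((j'+1+(k'+1)).choose (j'+1) : ℂ)) * hYd
        + ((u:ℂ)+(v:ℂ)+1-((j':ℂ)+(k':ℂ)+2))*(u.choose (j'+1) : ℂ)*(v.choose k' : ℂ) * hZ)
  rw [Finset.sum_congr rfl step, Finset.sum_range_sub (fun m => V i u v m) (i+1)]
  have hV0 : V i u v 0 = 0 := by simp [V]
  have hVtop : V i u v (i+1) = 0 := by simp [V, Nat.choose_succ_self]
  rw [hV0, hVtop, sub_zero]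

lemma gamP_eq (n i x : ℕ) : gamP n i x = G i (x-1) (n-x) := rfl

lemma eigen (n i x : ℕ) (hx1 : 1 ≤ x) (hxn : x ≤ n) :
    Lcl n (gamP n i) x = -((i:ℂ) * ((i:ℂ)+1) / 2) * gamP n i x := by
  set u := x - 1 with hu
  set v := n - x with hv
  have h2 : gamP n i (x+1) = G i (u+1) (v-1) := by
    rw [gamP_eq, show x+1-1 = u+1 by omega, show n-(x+1) = v-1 by omega]
  have h3 : gamP n i (x-1) = G i (u-1) (v+1) := by
    rw [gamP_eq, show x-1-1 = u-1 by omega, show n-(x-1) = v+1 by omega]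
  have h1 : gamP n i x = G i u v := gamP_eq n i x
  have hc2 : (n:ℂ) = (x:ℂ) + (v:ℂ) := by
    have : n = x + v := by omega
    rw [this]; push_cast; ring
  have hc1 : (x:ℂ) = (u:ℂ) + 1 := by
    have : x = u + 1 := by omega
    rw [this]; push_cast; ring
  rw [Lcl, h1, h2, h3, hc2, hc1]
  linear_combination (1/2 : ℂ) * key i u v

lemma Lcl_smul (n : ℕ) (c : ℂ) (f : ℕ → ℂ) (x : ℕ) :
    Lcl n (fun y => c * f y) x = c * Lcl n f x := by
  simp only [Lcl]; ring

lemma Lcl_add (n : ℕ) (f g : ℕ → ℂ) (x : ℕ) :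
    Lcl n (fun y => f y + g y) x = Lcl n f x + Lcl n g x := by
  simp only [Lcl]; ring

lemma Lcl_conj (n : ℕ) (f : ℕ → ℂ) (x : ℕ) :
    (starRingEnd ℂ) (Lcl n f x) = Lcl n (fun y => (starRingEnd ℂ) (f y)) x := by
  simp only [Lcl, map_add, map_mul, map_sub, map_div₀, map_one, map_ofNat, map_natCast]

lemma Lcl_congr (n : ℕ) (f g : ℕ → ℂ) (x : ℕ) (hx1 : 1 ≤ x) (hxn : x ≤ n)
    (h0 : f x = g x)
    (hlo : 2 ≤ x → f (x-1) = g (x-1))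
    (hhi : x < n → f (x+1) = g (x+1)) :
    Lcl n f x = Lcl n g x := by
  unfold Lcl
  rcases Nat.lt_or_ge x n with hlt | hge
  · rcases Nat.lt_or_ge x 2 with h2 | h2
    · have hx : x = 1 := by omega
      subst hx
      rw [h0, hhi hlt]
      push_cast
      ring
    · rw [h0, hhi hlt, hlo h2]
  · have hx : x = n := by omega
    subst hx
    rcases Nat.lt_or_ge x 2 with h2 | h2
    · have hx1' : x = 1 := by omega
      subst hx1'
      rw [h0]
      push_cast
      ring
    · rw [h0, hlo h2]
      push_cast
      ring

/-- extension of a vector on `Fin n` to `ℕ`, supported on `{1,...,n}`. -/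
def ext (n : ℕ) (f : Fin n → ℂ) : ℕ → ℂ :=
  fun y => if h : 1 ≤ y ∧ y ≤ n then f ⟨y-1, by omega⟩ else 0

lemma ext_add (n : ℕ) (f g : Fin n → ℂ) (y : ℕ) :
    ext n (f + g) y = ext n f y + ext n g y := by
  unfold ext
  by_cases h : 1 ≤ y ∧ y ≤ n <;> simp [h]

lemma ext_smul (n : ℕ) (c : ℂ) (f : Fin n → ℂ) (y : ℕ) :
    ext n (c • f) y = c * ext n f y := by
  unfold ext
  by_cases h : 1 ≤ y ∧ y ≤ n <;> simp [h]

/-- the generator as an endomorphism of `Fin n → ℂ`. -/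
def Tlin (n : ℕ) : (Fin n → ℂ) →ₗ[ℂ] (Fin n → ℂ) where
  toFun f := fun x => Lcl n (ext n f) ((x:ℕ)+1)
  map_add' f g := by
    funext x
    have : ext n (f + g) = fun y => ext n f y + ext n g y := by
      funext y; exact ext_add n f g y
    simp only [this, Lcl_add]
    rfl
  map_smul' c f := by
    funext x
    have : ext n (c • f) = fun y => c * ext n f y := by
      funext y; exact ext_smul n c f y
    simp only [this, Lcl_smul]
    rfl

lemma Tlin_restr (n : ℕ) (f : ℕ → ℂ) (x : Fin n) :
    Tlin n (fun y : Fin n => f ((y:ℕ)+1)) x = Lcl n f ((x:ℕ)+1) := by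
  show Lcl n (ext n _) ((x:ℕ)+1) = _
  have hxn : (x:ℕ) < n := x.isLt
  apply Lcl_congr n _ _ ((x:ℕ)+1) (by omega) (by omega)
  · unfold ext
    rw [dif_pos ⟨by omega, by omega⟩]
    show f (((x:ℕ)+1-1)+1) = f ((x:ℕ)+1)
    congr 1 <;> omega
  · intro h2
    unfold ext
    rw [show (x:ℕ)+1-1 = (x:ℕ) by omega, dif_pos ⟨by omega, by omega⟩]
    show f (((x:ℕ)-1)+1) = f ((x:ℕ))
    congr 1
    omega
  · intro hlt
    unfold ext
    rw [dif_pos ⟨by omega, by omega⟩]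
    show f (((x:ℕ)+1+1-1)+1) = f ((x:ℕ)+1+1)
    congr 1 <;> omega

/-- γ⁽ⁱ⁾ restricted to the grid. -/
def gvec (n i : ℕ) : Fin n → ℂ := fun x => gamP n i ((x:ℕ)+1)

lemma Tlin_gvec (n : ℕ) (i : ℕ) :
    Tlin n (gvec n i) = (-((i:ℂ) * ((i:ℂ)+1) / 2)) • gvec n i := by
  funext x
  have h1 : Tlin n (gvec n i) x = Lcl n (gamP n i) ((x:ℕ)+1) := Tlin_restr n (gamP n i) x
  rw [h1, eigen n i ((x:ℕ)+1) (by omega) (by have := x.isLt; omega)]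
  simp [gvec]

lemma gamP_one (n i : ℕ) : gamP n i 1 = (-1:ℂ)^i * ((n-1).choose i) := by
  rw [gamP]
  rw [Finset.sum_eq_single_of_mem 0 (Finset.mem_range.mpr (by omega))]
  · simp
  · intro j hj hj0
    rw [Nat.choose_eq_zero_of_lt (by omega : (1:ℕ)-1 < j)]
    simp

lemma gamP_one_ne (n i : ℕ) (hi : i < n) : gamP n i 1 ≠ 0 := by
  rw [gamP_one]
  apply mul_ne_zero
  · exact pow_ne_zero _ (by norm_num)
  · exact_mod_cast Nat.cast_ne_zero.mpr (Nat.choose_pos (by omega)).ne'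

lemma gvec_ne_zero (n i : ℕ) (hn : 1 ≤ n) (hi : i < n) : gvec n i ≠ 0 := by
  intro h
  have := congrFun h ⟨0, hn⟩
  simp only [gvec, Pi.zero_apply] at this
  exact gamP_one_ne n i hi this

lemma eigval_inj (n : ℕ) :
    Function.Injective (fun i : Fin n => -((i:ℂ) * ((i:ℂ)+1) / 2)) := by
  intro a b hab
  simp only at hab
  have h2 : (a:ℂ) * ((a:ℂ)+1) = (b:ℂ) * ((b:ℂ)+1) := by
    field_simp at hab
    linear_combination -hab
  have h3 : ((a:ℕ) * ((a:ℕ)+1) : ℕ) = ((b:ℕ) * ((b:ℕ)+1) : ℕ) := by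
    exact_mod_cast h2
  have : (a:ℕ) = (b:ℕ) := by nlinarith [h3]
  exact Fin.ext this

lemma gvec_li (n : ℕ) (hn : 1 ≤ n) :
    LinearIndependent ℂ (fun i : Fin n => gvec n (i:ℕ)) := by
  apply Module.End.eigenvectors_linearIndependent' (Tlin n)
    (fun i : Fin n => -((i:ℂ) * ((i:ℂ)+1) / 2)) (eigval_inj n)
  intro i
  constructor
  · rw [Module.End.mem_eigenspace_iff]
    exact Tlin_gvec n i
  · exact gvec_ne_zero n i hn i.isLt

lemma gvec_span (n : ℕ) (hn : 1 ≤ n) :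
    Submodule.span ℂ (Set.range (fun i : Fin n => gvec n (i:ℕ))) = ⊤ := by
  haveI : Nonempty (Fin n) := ⟨⟨0, hn⟩⟩
  apply LinearIndependent.span_eq_top_of_card_eq_finrank (gvec_li n hn)
  rw [Fintype.card_fin, Module.finrank_fin_fun]

lemma sum_parts (n : ℕ) (hn : 1 ≤ n) (φ ψ : ℕ → ℂ) :
    ∑ x ∈ Finset.Icc 1 n, φ x * Lcl n ψ x
      = ∑ y ∈ Finset.range (n-1),
          (1/2:ℂ) * ((y:ℂ)+1) * ((n:ℂ)-(y:ℂ)-1) * (φ (y+1) - φ (y+2)) * (ψ (y+2) - ψ (y+1)) := by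
  obtain ⟨m, rfl⟩ : ∃ m, n = m + 1 := ⟨n-1, by omega⟩
  rw [show Finset.Icc 1 (m+1) = Finset.Ico 1 (m+2) from by rw [← Finset.Ico_add_one_right_eq_Icc]; rfl,
    Finset.sum_Ico_eq_sum_range]
  simp only [show (m+2)-1 = m+1 from rfl]
  have hsplit : ∀ k : ℕ, φ (1+k) * Lcl (m+1) ψ (1+k)
      = ((1/2:ℂ) * ((k:ℂ)+1) * (((m:ℕ):ℂ)+1-((k:ℂ)+1)) * φ (k+1) * (ψ (k+2) - ψ (k+1)))
        + ((1/2:ℂ) * ((k:ℂ)+1-1) * (((m:ℕ):ℂ)+1-((k:ℂ)+1)+1) * φ (k+1) * (ψ k - ψ (k+1))) := by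
    intro k
    rw [show 1+k = k+1 from by omega]
    rw [Lcl, show k+1-1 = k from rfl, show k+1+1 = k+2 from rfl]
    push_cast
    ring
  rw [Finset.sum_congr rfl (fun k _ => hsplit k), Finset.sum_add_distrib]
  rw [Finset.sum_range_succ, Finset.sum_range_succ']
  have hz1 : (1/2:ℂ) * ((m:ℂ)+1) * (((m:ℕ):ℂ)+1-((m:ℂ)+1)) * φ (m+1) * (ψ (m+2) - ψ (m+1)) = 0 := by
    push_cast; ring
  have hz2 : (1/2:ℂ) * (((0:ℕ):ℂ)+1-1) * (((m:ℕ):ℂ)+1-(((0:ℕ):ℂ)+1)+1) * φ (0+1) * (ψ 0 - ψ (0+1)) = 0 := by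
    push_cast; ring
  rw [hz1, hz2, add_zero, add_zero, ← Finset.sum_add_distrib]
  apply Finset.sum_congr rfl
  intro k hk
  push_cast
  ring

end BDaux

open BDaux in
/-- For the birth-death chain on `{1,...,n}`: the (arbitrarily normalized)
discrete Chebyshev polynomials `c·γ⁽ⁱ⁾`, `i = 0,...,n-1`, are eigenfunctions of
`-L_cl` with eigenvalues `i(i+1)/2`; they form a basis of `ℂⁿ`
(`ℂⁿ = ⊕ᵢ ℂγ⁽ⁱ⁾`); `L_cl` is reversible with respect to the uniform probability
on `{1,...,n}`; and the spectrum of `-L_cl` is exactly `{i(i+1)/2 : 0 ≤ i < n}`. -/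
theorem birth_death_chebyshev (n : ℕ) (hn : 1 ≤ n) :
    (∀ i : ℕ, i < n → ∀ c : ℂ, c ≠ 0 → ∀ x ∈ Finset.Icc 1 n,
        Lcl n (fun y => c * gamP n i y) x = -((i : ℂ) * (i + 1) / 2) * (c * gamP n i x))
    ∧ LinearIndependent ℂ (fun i : Fin n => fun x : Fin n => gamP n i ((x : ℕ) + 1))
    ∧ Submodule.span ℂ
        (Set.range (fun i : Fin n => fun x : Fin n => gamP n i ((x : ℕ) + 1))) = ⊤
    ∧ (∀ f g : ℕ → ℂ,
        ∑ x ∈ Finset.Icc 1 n, (1 / (n : ℂ)) * (starRingEnd ℂ) (f x) * Lcl n g x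
          = ∑ x ∈ Finset.Icc 1 n, (1 / (n : ℂ)) * (starRingEnd ℂ) (Lcl n f x) * g x)
    ∧ (∀ μ : ℂ,
        (∃ F : ℕ → ℂ, (∃ x ∈ Finset.Icc 1 n, F x ≠ 0) ∧
          ∀ x ∈ Finset.Icc 1 n, Lcl n F x = -μ * F x)
        ↔ ∃ i : ℕ, i < n ∧ μ = (i : ℂ) * (i + 1) / 2) := by
  refine ⟨?_, ?_, ?_, ?_, ?_⟩
  · intro i hi c hc x hx
    rw [Finset.mem_Icc] at hx
    rw [Lcl_smul, eigen n i x hx.1 hx.2]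
    ring
  · exact gvec_li n hn
  · exact gvec_span n hn
  · intro f g
    have h2 : ∀ x ∈ Finset.Icc 1 n, (1/(n:ℂ)) * (starRingEnd ℂ) (Lcl n f x) * g x
        = (1/(n:ℂ) * g x) * Lcl n (fun y => (starRingEnd ℂ) (f y)) x := by
      intro x _
      rw [Lcl_conj]
      ring
    calc ∑ x ∈ Finset.Icc 1 n, (1 / (n : ℂ)) * (starRingEnd ℂ) (f x) * Lcl n g x
        = ∑ y ∈ Finset.range (n-1),
            (1/2:ℂ) * ((y:ℂ)+1) * ((n:ℂ)-(y:ℂ)-1) *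
              ((1/(n:ℂ) * (starRingEnd ℂ) (f (y+1))) - (1/(n:ℂ) * (starRingEnd ℂ) (f (y+2))))
              * (g (y+2) - g (y+1)) :=
          sum_parts n hn (fun x => 1/(n:ℂ) * (starRingEnd ℂ) (f x)) g
      _ = ∑ y ∈ Finset.range (n-1),
            (1/2:ℂ) * ((y:ℂ)+1) * ((n:ℂ)-(y:ℂ)-1) *
              ((1/(n:ℂ) * g (y+1)) - (1/(n:ℂ) * g (y+2)))
              * ((starRingEnd ℂ) (f (y+2)) - (starRingEnd ℂ) (f (y+1))) :=
          Finset.sum_congr rfl (fun y _ => by ring)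
      _ = ∑ x ∈ Finset.Icc 1 n, (1/(n:ℂ) * g x) * Lcl n (fun y => (starRingEnd ℂ) (f y)) x :=
          (sum_parts n hn (fun x => 1/(n:ℂ) * g x) (fun y => (starRingEnd ℂ) (f y))).symm
      _ = ∑ x ∈ Finset.Icc 1 n, (1 / (n : ℂ)) * (starRingEnd ℂ) (Lcl n f x) * g x :=
          (Finset.sum_congr rfl h2).symm
  · intro μ
    constructor
    · rintro ⟨F, ⟨x₀, hx₀, hF0⟩, hFe⟩
      rw [Finset.mem_Icc] at hx₀
      set v : Fin n → ℂ := fun x => F ((x:ℕ)+1) with hv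
      have hvne : v ≠ 0 := by
        intro h
        have := congrFun h ⟨x₀-1, by omega⟩
        simp only [hv, Pi.zero_apply] at this
        apply hF0
        rwa [show x₀-1+1 = x₀ by omega] at this
      have hTv : Tlin n v = (-μ) • v := by
        funext x
        rw [hv, Tlin_restr n F x,
          hFe ((x:ℕ)+1) (Finset.mem_Icc.mpr ⟨by omega, by have := x.isLt; omega⟩)]
        simp [Pi.smul_apply, smul_eq_mul]
      have hvmem : v ∈ Submodule.span ℂ (Set.range (fun i : Fin n => gvec n (i:ℕ))) := by
        rw [gvec_span n hn]
        exact Submodule.mem_top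
      obtain ⟨c, hcsum⟩ := (Submodule.mem_span_range_iff_exists_fun ℂ).mp hvmem
      have hTv' : ∑ i : Fin n, c i • ((-((i:ℂ)*((i:ℂ)+1)/2)) • gvec n (i:ℕ)) = (-μ) • v := by
        calc ∑ i : Fin n, c i • ((-((i:ℂ)*((i:ℂ)+1)/2)) • gvec n (i:ℕ))
            = ∑ i : Fin n, c i • (Tlin n (gvec n (i:ℕ))) := by
              refine Finset.sum_congr rfl (fun i _ => ?_)
              rw [Tlin_gvec]
          _ = Tlin n (∑ i : Fin n, c i • gvec n (i:ℕ)) := by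
              rw [map_sum]
              exact Finset.sum_congr rfl (fun i _ => (map_smul (Tlin n) (c i) _).symm)
          _ = Tlin n v := by rw [hcsum]
          _ = (-μ) • v := hTv
      have hA : ∑ i : Fin n, (c i * (-((i:ℂ)*((i:ℂ)+1)/2)) + μ * c i) • gvec n (i:ℕ) = 0 := by
        have hB : ∑ i : Fin n, (c i * (-((i:ℂ)*((i:ℂ)+1)/2)) + μ * c i) • gvec n (i:ℕ)
            = ∑ i : Fin n, c i • ((-((i:ℂ)*((i:ℂ)+1)/2)) • gvec n (i:ℕ))
              + μ • ∑ i : Fin n, c i • gvec n (i:ℕ) := by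
          rw [Finset.smul_sum, ← Finset.sum_add_distrib]
          refine Finset.sum_congr rfl (fun i _ => ?_)
          rw [smul_smul, smul_smul, ← add_smul]
        rw [hB, hTv', hcsum, ← add_smul]
        simp
      obtain ⟨i₀, hi₀⟩ : ∃ i, c i ≠ 0 := by
        by_contra h
        push_neg at h
        apply hvne
        rw [← hcsum]
        simp [h]
      have h0 := (Fintype.linearIndependent_iff.mp (gvec_li n hn)) _ hA i₀
      have h5 : (-((i₀:ℂ)*((i₀:ℂ)+1)/2) + μ) = 0 := by
        rcases mul_eq_zero.mp (show (c i₀) * (-((i₀:ℂ)*((i₀:ℂ)+1)/2) + μ) = 0 by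
          linear_combination h0) with h | h
        · exact absurd h hi₀
        · exact h
      exact ⟨i₀, i₀.isLt, by linear_combination h5⟩
    · rintro ⟨i, hi, rfl⟩
      refine ⟨gamP n i, ⟨1, Finset.mem_Icc.mpr ⟨le_refl 1, hn⟩, gamP_one_ne n i hi⟩, ?_⟩
      intro x hx
      rw [Finset.mem_Icc] at hx
      rw [eigen n i x hx.1 hx.2]
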